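/- Let G be a simple graph on a finite vertex set, ε ∈ (0, 1/2], and C a nonempty clique. Let V₀ be a finite set of vertices with C ⊆ V₀, set ε′ = ε²/(12·(1 + log₂ |V₀|)), and assume |C| ≥ 2/ε′ and that the set W = {u ∈ V₀ \ C : |Γ(u) ∩ C| < (1−ε′)|C|} has size at most ε′|C|. Define a sequence of vertex sets by V_{t+1} = {v ∈ V_t : |Γ(v) ∩ V_t| ≥ (1−ε/2)|V_t|} if some vertex v ∈ V_t has |Γ(v) ∩ V_t| < (1−ε)|V_t|, and V_{t+1} = V_t otherwise. Then the sequence (V_t) is eventually constant, and its limiting set F satisfies |F ∩ C| ≥ (1−ε)|C| and every v ∈ F has |Γ(v) ∩ F| ≥ (1−ε)|F|. -/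

import Mathlib

open Finset
open scoped Classical

private lemma natlog_le_logb (n : ℕ) (hn : 1 ≤ n) :
    (Nat.log 2 n : ℝ) ≤ Real.logb 2 n := by
  have h1 : ((2:ℝ) ^ (Nat.log 2 n) : ℝ) ≤ (n:ℝ) := by
    exact_mod_cast Nat.pow_log_le_self 2 (by omega)
  have h2 : Real.logb 2 ((2:ℝ) ^ (Nat.log 2 n)) ≤ Real.logb 2 n :=
    Real.logb_le_logb_of_le (by norm_num) (by positivity) h1
  simpa [Real.logb_pow, Real.logb_self_eq_one] using h2

set_option maxHeartbeats 4000000 in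
/-- The relaxed-gap theorem: starting from a superset `V₀` of a clique community `C` in which
all but at most `ε′|C|` of the non-community vertices know at least a `1 − ε′` fraction of
`C`, the iterated low-density-removal process stabilizes at a set `F` retaining a `1 − ε`
fraction of `C` and in which every vertex has density at least `1 − ε`. -/
theorem relaxed_gap_removal_process {V : Type*} [Fintype V] [DecidableEq V]
    (G : SimpleGraph V) [DecidableRel G.Adj]
    (ε : ℝ) (hε0 : 0 < ε) (hε1 : ε ≤ 1 / 2)
    (C : Finset V) (hCne : C.Nonempty)
    (hclique : ∀ x ∈ C, ∀ y ∈ C, x ≠ y → G.Adj x y)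
    (V₀ : Finset V) (hCV₀ : C ⊆ V₀)
    (ε' : ℝ) (hε' : ε' = ε ^ 2 / (12 * (1 + Real.logb 2 (V₀.card : ℝ))))
    (hCsize : 2 / ε' ≤ (C.card : ℝ))
    (hW : (((V₀ \ C).filter (fun u =>
        ((G.neighborFinset u ∩ C).card : ℝ) < (1 - ε') * C.card)).card : ℝ) ≤ ε' * C.card)
    (Vseq : ℕ → Finset V) (hV0 : Vseq 0 = V₀)
    (hstep : ∀ t, Vseq (t + 1) =
      if ∃ v ∈ Vseq t, ((G.neighborFinset v ∩ Vseq t).card : ℝ) < (1 - ε) * (Vseq t).card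
      then (Vseq t).filter (fun v =>
        (1 - ε / 2) * (Vseq t).card ≤ ((G.neighborFinset v ∩ Vseq t).card : ℝ))
      else Vseq t) :
    ∃ N, (∀ t, N ≤ t → Vseq t = Vseq N) ∧
      (1 - ε) * C.card ≤ ((Vseq N ∩ C).card : ℝ) ∧
      ∀ v ∈ Vseq N, (1 - ε) * (Vseq N).card ≤ ((G.neighborFinset v ∩ Vseq N).card : ℝ) := by
  classical
  set Wfin := (V₀ \ C).filter (fun u =>
      ((G.neighborFinset u ∩ C).card : ℝ) < (1 - ε') * C.card) with hWfindef
  -- basic positivity facts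
  have hC0 : (0:ℝ) < C.card := by exact_mod_cast Finset.card_pos.mpr hCne
  have hV₀1 : 1 ≤ V₀.card := Finset.card_pos.mpr (hCne.mono hCV₀)
  have hL0 : 0 ≤ Real.logb 2 (V₀.card : ℝ) :=
    Real.logb_nonneg (by norm_num) (by exact_mod_cast hV₀1)
  have hε'pos : 0 < ε' := by
    rw [hε']; positivity
  have hε'le : ε' ≤ ε ^ 2 / 12 := by
    rw [hε']
    apply div_le_div_of_nonneg_left (by positivity) (by norm_num)
    nlinarith
  have h2C : 2 ≤ ε' * C.card := by
    rw [div_le_iff₀ hε'pos] at hCsize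
    linarith [hCsize]
  -- monotonicity of the sequence
  have hmono : ∀ t, Vseq (t + 1) ⊆ Vseq t := by
    intro t
    rw [hstep t]
    split_ifs with h
    · exact Finset.filter_subset _ _
    · exact subset_rfl
  have hanti : ∀ s t, s ≤ t → Vseq t ⊆ Vseq s := by
    intro s t h
    induction t with
    | zero => obtain rfl := Nat.le_zero.mp h; exact subset_rfl
    | succ n ih =>
      rcases Nat.lt_or_ge s (n + 1) with h' | h'
      · exact (hmono n).trans (ih (Nat.lt_succ_iff.mp h'))
      · obtain rfl := le_antisymm h h'
        exact subset_rfl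
  have hsubV₀ : ∀ t, Vseq t ⊆ V₀ := fun t => hV0 ▸ hanti 0 t (Nat.zero_le t)
  -- existence of a stabilization point
  have hexN : ∃ N, Vseq (N + 1) = Vseq N := by
    by_contra h
    push_neg at h
    have hcard : ∀ t, (Vseq t).card + t ≤ (Vseq 0).card := by
      intro t
      induction t with
      | zero => simp
      | succ n ih =>
        have hss : Vseq (n + 1) ⊂ Vseq n := Finset.ssubset_iff_subset_ne.mpr ⟨hmono n, h n⟩
        have := Finset.card_lt_card hss
        omega
    have := hcard ((Vseq 0).card + 1)
    omega
  obtain ⟨N, hN⟩ := hexN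
  have hconst : ∀ t, N ≤ t → Vseq t = Vseq N := by
    intro t ht
    induction t with
    | zero => obtain rfl := Nat.le_zero.mp ht; rfl
    | succ n ih =>
      rcases Nat.lt_or_ge N (n + 1) with h' | h'
      · have hn : Vseq n = Vseq N := ih (Nat.lt_succ_iff.mp h')
        rw [hstep n, hn, ← hstep N, hN]
      · obtain rfl := le_antisymm h' ht; rfl
  -- at time N no low-density witness exists
  have hnowit : ¬ ∃ v ∈ Vseq N,
      ((G.neighborFinset v ∩ Vseq N).card : ℝ) < (1 - ε) * (Vseq N).card := by
    intro hex
    obtain ⟨v, hv, hvd⟩ := hex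
    have h1 : Vseq (N + 1) = (Vseq N).filter (fun v =>
        (1 - ε / 2) * (Vseq N).card ≤ ((G.neighborFinset v ∩ Vseq N).card : ℝ)) := by
      rw [hstep N, if_pos ⟨v, hv, hvd⟩]
    have hv' : v ∈ Vseq (N + 1) := hN ▸ hv
    rw [h1, Finset.mem_filter] at hv'
    have hc : (0:ℝ) ≤ (Vseq N).card := Nat.cast_nonneg _
    nlinarith [hv'.2]
  have hdens : ∀ v ∈ Vseq N,
      (1 - ε) * (Vseq N).card ≤ ((G.neighborFinset v ∩ Vseq N).card : ℝ) := by
    intro v hv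
    by_contra hlt
    exact hnowit ⟨v, hv, not_le.mp hlt⟩
  refine ⟨N, hconst, ?_, hdens⟩
  -- the main counting argument
  by_contra hcon
  push_neg at hcon
  -- the final loss exceeds ε |C|
  have hlossN : ε * C.card < ((C \ Vseq N).card : ℝ) := by
    have h1 : (C ∩ Vseq N).card + (C \ Vseq N).card = C.card :=
      Finset.card_inter_add_card_sdiff C (Vseq N)
    have h2 : (Vseq N ∩ C) = (C ∩ Vseq N) := Finset.inter_comm _ _
    rw [h2] at hcon
    have h3 : ((C ∩ Vseq N).card : ℝ) + ((C \ Vseq N).card : ℝ) = (C.card : ℝ) := by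
      exact_mod_cast h1
    nlinarith
  -- N ≥ 1 since C ⊆ Vseq 0, so the loss threshold is crossed at some step
  have hexT : ∃ t, ε * C.card < ((C \ Vseq (t + 1)).card : ℝ) := by
    rcases N with _ | M
    · exfalso
      have h0 : C \ Vseq 0 = ∅ := by rw [hV0]; exact Finset.sdiff_eq_empty_iff_subset.mpr hCV₀
      rw [h0] at hlossN
      simp at hlossN
      nlinarith
    · exact ⟨M, hlossN⟩
  set T := Nat.find hexT with hTdef
  have hPT : ε * C.card < ((C \ Vseq (T + 1)).card : ℝ) := Nat.find_spec hexT
  have hloss : ∀ t, t ≤ T → ((C \ Vseq t).card : ℝ) ≤ ε * C.card := by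
    intro t ht
    rcases t with _ | s
    · have h0 : C \ Vseq 0 = ∅ := by rw [hV0]; exact Finset.sdiff_eq_empty_iff_subset.mpr hCV₀
      rw [h0]
      simp
      positivity
    · have hsT : s < T := Nat.lt_of_lt_of_le (Nat.lt_succ_self s) ht
      exact not_lt.mp (Nat.find_min hexT hsT)
  set D := C \ Vseq (T + 1) with hDdef
  have hDC : D ⊆ C := Finset.sdiff_subset
  -- removal times
  set τ : V → ℕ := fun c => if h : ∃ t, c ∉ Vseq (t + 1) then Nat.find h else 0 with hτdef
  have hτprop : ∀ c ∈ D, c ∉ Vseq (τ c + 1) ∧ c ∈ Vseq (τ c) ∧ τ c ≤ T := by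
    intro c hc
    have hcC : c ∈ C := hDC hc
    have hcT : c ∉ Vseq (T + 1) := (Finset.mem_sdiff.mp hc).2
    have hex : ∃ t, c ∉ Vseq (t + 1) := ⟨T, hcT⟩
    have hτc : τ c = Nat.find hex := by rw [hτdef]; simp only [dif_pos hex]
    refine ⟨hτc ▸ Nat.find_spec hex, ?_, hτc ▸ Nat.find_le hcT⟩
    rw [hτc]
    rcases h : Nat.find hex with _ | s
    · rw [hV0]; exact hCV₀ hcC
    · have hmin : ¬ c ∉ Vseq (s + 1) := Nat.find_min hex (by omega)
      exact not_not.mp hmin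
  -- at removal time, the vertex had low density
  have hrem : ∀ c ∈ D, ((G.neighborFinset c ∩ Vseq (τ c)).card : ℝ) <
      (1 - ε / 2) * (Vseq (τ c)).card := by
    intro c hc
    obtain ⟨hout, hin, _⟩ := hτprop c hc
    by_cases hP : ∃ v ∈ Vseq (τ c),
        ((G.neighborFinset v ∩ Vseq (τ c)).card : ℝ) < (1 - ε) * (Vseq (τ c)).card
    · rw [hstep (τ c), if_pos hP] at hout
      rw [Finset.mem_filter] at hout
      push_neg at hout
      exact hout hin
    · rw [hstep (τ c), if_neg hP] at hout
      exact absurd hin hout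
  -- non-neighborhood sets
  set NB : V → Finset V := fun c => ((Vseq (τ c)) \ C).filter (fun u => ¬ G.Adj c u) with hNBdef
  have hNBcard : ∀ c ∈ D, (ε / 2) * ((Vseq (τ c)).card : ℝ) ≤ ((NB c).card : ℝ) + 1 := by
    intro c hc
    have hcC : c ∈ C := hDC hc
    set A := (Vseq (τ c)).filter (fun u => ¬ G.Adj c u) with hAdef
    have hfil : (Vseq (τ c)).filter (fun u => G.Adj c u) = G.neighborFinset c ∩ Vseq (τ c) := by
      ext u
      simp [Finset.mem_filter, Finset.mem_inter, SimpleGraph.mem_neighborFinset, and_comm]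
    have hsum : ((Vseq (τ c)).filter (fun u => G.Adj c u)).card + A.card = (Vseq (τ c)).card :=
      Finset.card_filter_add_card_filter_not _
    rw [hfil] at hsum
    have hsumR : ((G.neighborFinset c ∩ Vseq (τ c)).card : ℝ) + (A.card : ℝ)
        = ((Vseq (τ c)).card : ℝ) := by exact_mod_cast hsum
    have hAge : (ε / 2) * ((Vseq (τ c)).card : ℝ) ≤ (A.card : ℝ) := by
      have := hrem c hc
      nlinarith
    have hsub : A ⊆ insert c (NB c) := by
      intro u hu
      rw [hAdef, Finset.mem_filter] at hu
      by_cases huC : u ∈ C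
      · have : u = c := by
          by_contra hne
          exact hu.2 (hclique c hcC u huC (fun h => hne h.symm))
        rw [this]; exact Finset.mem_insert_self _ _
      · apply Finset.mem_insert_of_mem
        rw [hNBdef]
        simp only [Finset.mem_filter, Finset.mem_sdiff]
        exact ⟨⟨hu.1, huC⟩, hu.2⟩
    have hAle : A.card ≤ (NB c).card + 1 := by
      calc A.card ≤ (insert c (NB c)).card := Finset.card_le_card hsub
      _ ≤ (NB c).card + 1 := Finset.card_insert_le _ _
    have hAleR : (A.card : ℝ) ≤ ((NB c).card : ℝ) + 1 := by exact_mod_cast hAle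
    linarith
  -- scales partition
  set klog : V → ℕ := fun c => Nat.log 2 (Vseq (τ c)).card with hklogdef
  set 𝒦 := D.image klog with h𝒦def
  have hsplit : D.card = ∑ j ∈ 𝒦, (D.filter (fun c => klog c = j)).card :=
    Finset.card_eq_sum_card_fiberwise (fun c hc => Finset.mem_image_of_mem klog hc)
  -- per-scale bound
  have hscale : ∀ j ∈ 𝒦, ((D.filter (fun c => klog c = j)).card : ℝ) ≤ 8 * ε' / ε * C.card := by
    intro j hj
    set Dj := D.filter (fun c => klog c = j) with hDjdef
    obtain ⟨c₀', hc₀'D, hc₀'k⟩ := Finset.mem_image.mp hj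
    have hDjne : Dj.Nonempty := ⟨c₀', Finset.mem_filter.mpr ⟨hc₀'D, hc₀'k⟩⟩
    set tmin := (Dj.image τ).min' (hDjne.image τ) with htmindef
    obtain ⟨c₀, hc₀Dj, hc₀τ⟩ := Finset.mem_image.mp ((Dj.image τ).min'_mem (hDjne.image τ))
    have hc₀D : c₀ ∈ D := (Finset.mem_filter.mp hc₀Dj).1
    have hc₀k : klog c₀ = j := (Finset.mem_filter.mp hc₀Dj).2
    have hc₀τ' : τ c₀ = tmin := by rw [htmindef]; exact hc₀τ
    set S := Vseq tmin with hSdef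
    have htminle : ∀ c ∈ Dj, tmin ≤ τ c := fun c hc =>
      Finset.min'_le _ _ (Finset.mem_image_of_mem τ hc)
    have hSsub : ∀ c ∈ Dj, Vseq (τ c) ⊆ S := fun c hc => hanti _ _ (htminle c hc)
    have hS0 : S = Vseq (τ c₀) := by rw [hSdef, hc₀τ']
    -- scale bounds
    set X : ℝ := (2:ℝ) ^ j with hXdef
    have hX0 : 0 < X := by positivity
    have hjcard : ∀ c ∈ Dj, X ≤ ((Vseq (τ c)).card : ℝ) := by
      intro c hc
      have hcD : c ∈ D := (Finset.mem_filter.mp hc).1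
      have hck : klog c = j := (Finset.mem_filter.mp hc).2
      simp only [hklogdef] at hck
      have hne : (Vseq (τ c)).card ≠ 0 :=
        Finset.card_ne_zero_of_mem (hτprop c hcD).2.1
      have h1 : 2 ^ j ≤ (Vseq (τ c)).card := by
        rw [← hck]; exact Nat.pow_log_le_self 2 hne
      rw [hXdef]
      exact_mod_cast h1
    have hn₀lt : (S.card : ℝ) < 2 * X := by
      simp only [hklogdef] at hc₀k
      have h1 : (Vseq (τ c₀)).card < 2 ^ (j + 1) := by
        rw [← hc₀k]
        exact Nat.lt_pow_succ_log_self (by norm_num) _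
      rw [hS0]
      have h2 : ((Vseq (τ c₀)).card : ℝ) < ((2:ℝ)) ^ (j + 1) := by exact_mod_cast h1
      rw [hXdef]
      calc ((Vseq (τ c₀)).card : ℝ) < (2:ℝ) ^ (j + 1) := h2
      _ = 2 * (2:ℝ) ^ j := by ring
    -- C mostly survives into S
    have hCS : (1 - ε) * C.card ≤ ((C ∩ S).card : ℝ) := by
      have htmT : tmin ≤ T := hc₀τ' ▸ (hτprop c₀ hc₀D).2.2
      have h1 : ((C \ S).card : ℝ) ≤ ε * C.card := hloss tmin htmT
      have h2 : (C ∩ S).card + (C \ S).card = C.card := Finset.card_inter_add_card_sdiff _ _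
      have h3 : ((C ∩ S).card : ℝ) + ((C \ S).card : ℝ) = (C.card : ℝ) := by exact_mod_cast h2
      linarith
    have hC4X : (C.card : ℝ) ≤ 4 * X := by
      have h2 : ((C ∩ S).card : ℝ) ≤ (S.card : ℝ) := by
        exact_mod_cast Finset.card_le_card (Finset.inter_subset_right)
      nlinarith
    -- the double counting
    have hNBsub : ∀ c ∈ Dj, NB c ⊆ S \ C := by
      intro c hc u hu
      rw [hNBdef] at hu
      simp only [Finset.mem_filter, Finset.mem_sdiff] at hu
      exact Finset.mem_sdiff.mpr ⟨hSsub c hc hu.1.1, hu.1.2⟩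
    have hswap : ∑ c ∈ Dj, (NB c).card
        = ∑ u ∈ S \ C, (Dj.filter (fun c => u ∈ NB c)).card := by
      have h1 : ∀ c ∈ Dj, (NB c).card = ∑ u ∈ S \ C, if u ∈ NB c then 1 else 0 := by
        intro c hc
        rw [Finset.sum_ite_mem, Finset.inter_eq_right.mpr (hNBsub c hc)]
        simp
      rw [Finset.sum_congr rfl h1, Finset.sum_comm]
      exact Finset.sum_congr rfl fun u _ => (Finset.card_filter _ _).symm
    have hswapR : ∑ c ∈ Dj, ((NB c).card : ℝ)
        = ∑ u ∈ S \ C, ((Dj.filter (fun c => u ∈ NB c)).card : ℝ) := by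
      exact_mod_cast hswap
    -- lower bound on the double count
    have hlow : (Dj.card : ℝ) * ((ε / 2) * X - 1) ≤ ∑ c ∈ Dj, ((NB c).card : ℝ) := by
      have h1 : ∀ c ∈ Dj, (ε / 2) * X - 1 ≤ ((NB c).card : ℝ) := by
        intro c hc
        have h2 := hNBcard c ((Finset.mem_filter.mp hc).1)
        have h3 := hjcard c hc
        nlinarith
      calc (Dj.card : ℝ) * ((ε / 2) * X - 1) = ∑ _c ∈ Dj, ((ε / 2) * X - 1) := by
            rw [Finset.sum_const, nsmul_eq_mul]
      _ ≤ _ := Finset.sum_le_sum h1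
    -- upper bound on the double count
    have hup : ∑ u ∈ S \ C, ((Dj.filter (fun c => u ∈ NB c)).card : ℝ)
        ≤ (S.card : ℝ) * (ε' * C.card) + (ε' * C.card) * Dj.card := by
      rw [← Finset.sum_filter_add_sum_filter_not (S \ C) (fun u => u ∈ Wfin)]
      have hpart1 : ∑ u ∈ (S \ C).filter (fun u => u ∈ Wfin),
          ((Dj.filter (fun c => u ∈ NB c)).card : ℝ) ≤ (ε' * C.card) * Dj.card := by
        calc ∑ u ∈ (S \ C).filter (fun u => u ∈ Wfin),
              ((Dj.filter (fun c => u ∈ NB c)).card : ℝ)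
            ≤ ∑ _u ∈ (S \ C).filter (fun u => u ∈ Wfin), (Dj.card : ℝ) :=
              Finset.sum_le_sum fun u _ => by
                exact_mod_cast Finset.card_le_card (Finset.filter_subset _ _)
        _ = ((((S \ C).filter (fun u => u ∈ Wfin)).card : ℝ)) * Dj.card := by
              rw [Finset.sum_const, nsmul_eq_mul]
        _ ≤ (ε' * C.card) * Dj.card := by
              apply mul_le_mul_of_nonneg_right _ (Nat.cast_nonneg _)
              calc ((((S \ C).filter (fun u => u ∈ Wfin)).card : ℝ)) ≤ (Wfin.card : ℝ) := by
                    exact_mod_cast Finset.card_le_card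
                      (fun u hu => (Finset.mem_filter.mp hu).2)
              _ ≤ ε' * C.card := hW
      have hpart2 : ∑ u ∈ (S \ C).filter (fun u => ¬ u ∈ Wfin),
          ((Dj.filter (fun c => u ∈ NB c)).card : ℝ) ≤ (S.card : ℝ) * (ε' * C.card) := by
        have hterm : ∀ u ∈ (S \ C).filter (fun u => ¬ u ∈ Wfin),
            ((Dj.filter (fun c => u ∈ NB c)).card : ℝ) ≤ ε' * C.card := by
          intro u hu
          obtain ⟨huSC, huW⟩ := Finset.mem_filter.mp hu
          obtain ⟨huS, huC⟩ := Finset.mem_sdiff.mp huSC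
          have huV₀ : u ∈ V₀ := hsubV₀ tmin huS
          have hknow : (1 - ε') * C.card ≤ ((G.neighborFinset u ∩ C).card : ℝ) := by
            by_contra hlt
            exact huW (Finset.mem_filter.mpr
              ⟨Finset.mem_sdiff.mpr ⟨huV₀, huC⟩, not_le.mp hlt⟩)
          have hsub2 : Dj.filter (fun c => u ∈ NB c) ⊆ C \ G.neighborFinset u := by
            intro c hc
            obtain ⟨hcDj, hcNB⟩ := Finset.mem_filter.mp hc
            have hcC : c ∈ C := hDC (Finset.mem_filter.mp hcDj).1
            rw [hNBdef] at hcNB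
            simp only [Finset.mem_filter, Finset.mem_sdiff] at hcNB
            refine Finset.mem_sdiff.mpr ⟨hcC, ?_⟩
            rw [SimpleGraph.mem_neighborFinset]
            intro hadj
            exact hcNB.2 hadj.symm
          have hcards : ((C \ G.neighborFinset u).card : ℝ) ≤ ε' * C.card := by
            have h1 : (C ∩ G.neighborFinset u).card + (C \ G.neighborFinset u).card = C.card :=
              Finset.card_inter_add_card_sdiff _ _
            have h1R : ((C ∩ G.neighborFinset u).card : ℝ)
                + ((C \ G.neighborFinset u).card : ℝ) = (C.card : ℝ) := by exact_mod_cast h1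
            have h2 : (C ∩ G.neighborFinset u) = (G.neighborFinset u ∩ C) :=
              Finset.inter_comm _ _
            rw [h2] at h1R
            linarith
          calc ((Dj.filter (fun c => u ∈ NB c)).card : ℝ)
              ≤ ((C \ G.neighborFinset u).card : ℝ) := by
                exact_mod_cast Finset.card_le_card hsub2
          _ ≤ ε' * C.card := hcards
        calc ∑ u ∈ (S \ C).filter (fun u => ¬ u ∈ Wfin),
              ((Dj.filter (fun c => u ∈ NB c)).card : ℝ)
            ≤ ∑ _u ∈ (S \ C).filter (fun u => ¬ u ∈ Wfin), (ε' * C.card) :=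
              Finset.sum_le_sum hterm
        _ = ((((S \ C).filter (fun u => ¬ u ∈ Wfin)).card : ℝ)) * (ε' * C.card) := by
              rw [Finset.sum_const, nsmul_eq_mul]
        _ ≤ (S.card : ℝ) * (ε' * C.card) := by
              apply mul_le_mul_of_nonneg_right _ (by exact mul_nonneg hε'pos.le hC0.le)
              exact_mod_cast Finset.card_le_card
                ((Finset.filter_subset _ _).trans Finset.sdiff_subset)
      linarith
    -- combine
    have hcomb : (Dj.card : ℝ) * ((ε / 2) * X - 1)
        ≤ 2 * X * (ε' * C.card) + (ε' * C.card) * Dj.card := by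
      have hS2X : (S.card : ℝ) * (ε' * C.card) ≤ 2 * X * (ε' * C.card) :=
        mul_le_mul_of_nonneg_right (le_of_lt hn₀lt) (mul_nonneg hε'pos.le hC0.le)
      calc (Dj.card : ℝ) * ((ε / 2) * X - 1) ≤ ∑ c ∈ Dj, ((NB c).card : ℝ) := hlow
      _ = ∑ u ∈ S \ C, ((Dj.filter (fun c => u ∈ NB c)).card : ℝ) := hswapR
      _ ≤ (S.card : ℝ) * (ε' * C.card) + (ε' * C.card) * Dj.card := hup
      _ ≤ 2 * X * (ε' * C.card) + (ε' * C.card) * Dj.card := by linarith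
    -- arithmetic: conclude the per-scale bound
    have h1' : 1 + ε' * C.card ≤ (ε / 4) * X := by
      have ha : ε' * C.card ≤ ε' * (4 * X) := mul_le_mul_of_nonneg_left hC4X hε'pos.le
      have hb : ε' * X ≤ ε ^ 2 / 12 * X := mul_le_mul_of_nonneg_right hε'le hX0.le
      have hc : (ε ^ 2 / 2) * X ≤ (ε / 4) * X :=
        mul_le_mul_of_nonneg_right (by nlinarith) hX0.le
      nlinarith
    have hDj0 : (0:ℝ) ≤ (Dj.card : ℝ) := Nat.cast_nonneg _
    have h2' : (Dj.card : ℝ) * ((ε / 4) * X) ≤ 2 * X * (ε' * C.card) := by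
      nlinarith [mul_le_mul_of_nonneg_left h1' hDj0]
    rw [show (8 : ℝ) * ε' / ε * C.card = (8 * ε' * C.card) / ε by ring, le_div_iff₀ hε0]
    nlinarith
  -- sum up over all scales
  have hDsum : ((D.card : ℝ)) ≤ (𝒦.card : ℝ) * (8 * ε' / ε * C.card) := by
    calc (D.card : ℝ) = ∑ j ∈ 𝒦, ((D.filter (fun c => klog c = j)).card : ℝ) := by
          exact_mod_cast hsplit
    _ ≤ ∑ _j ∈ 𝒦, (8 * ε' / ε * C.card) := Finset.sum_le_sum hscale
    _ = (𝒦.card : ℝ) * (8 * ε' / ε * C.card) := by rw [Finset.sum_const, nsmul_eq_mul]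
  have h𝒦le : 𝒦.card ≤ Nat.log 2 V₀.card + 1 := by
    have hsub : 𝒦 ⊆ Finset.range (Nat.log 2 V₀.card + 1) := by
      intro j hj
      obtain ⟨c, hcD, hck⟩ := Finset.mem_image.mp hj
      rw [Finset.mem_range, Nat.lt_succ_iff, ← hck]
      simp only [hklogdef]
      exact Nat.log_mono_right (Finset.card_le_card (hsubV₀ (τ c)))
    calc 𝒦.card ≤ (Finset.range (Nat.log 2 V₀.card + 1)).card := Finset.card_le_card hsub
    _ = Nat.log 2 V₀.card + 1 := Finset.card_range _
  -- final contradiction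
  have hKreal : ((Nat.log 2 V₀.card : ℕ) : ℝ) ≤ Real.logb 2 (V₀.card : ℝ) :=
    natlog_le_logb _ hV₀1
  have h8pos : (0:ℝ) ≤ 8 * ε' / ε * C.card := by positivity
  have hfinal : ε * C.card < ((Nat.log 2 V₀.card : ℝ) + 1) * (8 * ε' / ε * C.card) := by
    calc ε * C.card < (D.card : ℝ) := hPT
    _ ≤ (𝒦.card : ℝ) * (8 * ε' / ε * C.card) := hDsum
    _ ≤ ((Nat.log 2 V₀.card : ℝ) + 1) * (8 * ε' / ε * C.card) := by
        apply mul_le_mul_of_nonneg_right _ h8pos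
        exact_mod_cast h𝒦le
  set L := Real.logb 2 (V₀.card : ℝ) with hLdef
  set K := (Nat.log 2 V₀.card : ℝ) with hKdef
  have hεform : ε' * (12 * (1 + L)) = ε ^ 2 := by
    rw [hε']
    field_simp
  have hfinal' : ε ^ 2 * C.card < (K + 1) * (8 * ε' * C.card) := by
    have hmulε : (K + 1) * (8 * ε' / ε * C.card) * ε = (K + 1) * (8 * ε' * C.card) := by
      field_simp
    have := mul_lt_mul_of_pos_right hfinal hε0
    rw [hmulε] at this
    nlinarith
  have hdivC : ε ^ 2 < (K + 1) * (8 * ε') := by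
    by_contra hge
    push_neg at hge
    have := mul_le_mul_of_nonneg_right hge hC0.le
    nlinarith
  have hKL : K ≤ L := hKreal
  nlinarith [mul_nonneg hε'pos.le (sub_nonneg.mpr hKL), mul_pos hε'pos (by linarith : (0:ℝ) < 1 + L)]
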